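/- For a PFB instance, let σ be an earliest release date ordering of the jobs. Then for every feasible schedule S there exists a feasible permutation schedule Ŝ ordered by σ with Σ_{j=1}^{n} C_j(Ŝ) ≤ Σ_{j=1}^{n} C_j(S). In particular, permutation schedules ordered by σ are optimal for minimizing the total completion time. -/

import Mathlib

/-- A PFB instance has `m+1` machines (indexed by `Fin (m+1)`, so at least one) and
`n+1` jobs (indexed by `Fin (n+1)`, so at least one). `p i` is the processing time of
machine `i`, `b i` its maximum batch size, `r j` the release date of job `j`.
A schedule `c` assigns to machine `i` and job `j` the completion time `c i j`.
`Feasible p b r c` says: (i) each job finishes on the first machine no earlier than its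
release date plus `p 0`; (ii) consecutive machines leave enough processing time;
(iii) two jobs with different completion times on a machine differ by at least the
processing time (jobs with equal completion time form one batch); (iv) at most `b i`
jobs complete at any given time on machine `i`. -/
def Feasible {m n : ℕ} (p b : Fin (m + 1) → ℕ) (r : Fin (n + 1) → ℕ)
    (c : Fin (m + 1) → Fin (n + 1) → ℕ) : Prop :=
  (∀ j, r j + p 0 ≤ c 0 j) ∧
  (∀ (i : Fin m) (j : Fin (n + 1)), c i.castSucc j + p i.succ ≤ c i.succ j) ∧
  (∀ (i : Fin (m + 1)) (j j' : Fin (n + 1)),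
      c i j ≠ c i j' → c i j + p i ≤ c i j' ∨ c i j' + p i ≤ c i j) ∧
  (∀ (i : Fin (m + 1)) (t : ℕ),
      (Finset.univ.filter (fun j => c i j = t)).card ≤ b i)

/-- `c` is a permutation schedule ordered by the permutation `σ`:
on every machine the completion times are nondecreasing along `σ`. -/
def OrderedBy {m n : ℕ} (c : Fin (m + 1) → Fin (n + 1) → ℕ)
    (σ : Equiv.Perm (Fin (n + 1))) : Prop :=
  ∀ i : Fin (m + 1), Monotone fun j => c i (σ j)

lemma key_sorted {N : ℕ} (f g : Fin N → ℕ) (πf πg : Equiv.Perm (Fin N))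
    (hf : Monotone (f ∘ πf)) (hg : Monotone (g ∘ πg)) (h : ∀ j, f j ≤ g j)
    (k : Fin N) : f (πf k) ≤ g (πg k) := by
  by_contra h'
  push_neg at h'
  have h1 : (Finset.Iic k).card ≤
      (Finset.univ.filter fun j => g j ≤ g (πg k)).card := by
    apply Finset.card_le_card_of_injOn (fun l => πg l)
    · intro l hl
      simp only [Finset.mem_coe, Finset.mem_Iic] at hl
      simp only [Finset.mem_coe, Finset.mem_filter, Finset.mem_univ, true_and]
      exact hg hl
    · intro a _ b _ hab
      exact πg.injective hab
  have h2 : (Finset.univ.filter fun j => g j ≤ g (πg k)) ⊆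
      (Finset.univ.filter fun j => f j < f (πf k)) := by
    intro j hj
    simp only [Finset.mem_filter, Finset.mem_univ, true_and] at hj ⊢
    exact lt_of_le_of_lt (le_trans (h j) hj) h'
  have h3 : (Finset.univ.filter fun j => f j < f (πf k)).card ≤
      (Finset.Iio k).card := by
    apply Finset.card_le_card_of_injOn (fun j => πf.symm j)
    · intro j hj
      simp only [Finset.mem_coe, Finset.mem_filter, Finset.mem_univ, true_and] at hj
      simp only [Finset.mem_coe, Finset.mem_Iio]
      by_contra hk
      push_neg at hk
      have := hf hk
      simp only [Function.comp_apply, Equiv.apply_symm_apply] at this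
      omega
    · intro a _ b _ hab
      exact πf.symm.injective hab
  have hIic : (Finset.Iic k).card = k + 1 := Fin.card_Iic k
  have hIio : (Finset.Iio k).card = k := Fin.card_Iio k
  have := le_trans h1 (le_trans (Finset.card_le_card h2) h3)
  omega

/-- for any earliest release date ordering `σ` and any feasible schedule
`c`, there is a feasible permutation schedule ordered by `σ` whose total completion
time is at most that of `c`; in particular such permutation schedules are optimal for
minimizing the total completion time. -/
theorem stmt2 {m n : ℕ} (p b : Fin (m + 1) → ℕ) (r : Fin (n + 1) → ℕ)
    (hp : ∀ i, 1 ≤ p i) (hb : ∀ i, 1 ≤ b i ∧ b i ≤ n + 1)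
    (c : Fin (m + 1) → Fin (n + 1) → ℕ) (hc : Feasible p b r c)
    (σ : Equiv.Perm (Fin (n + 1))) (hσ : Monotone fun j => r (σ j)) :
    ∃ chat : Fin (m + 1) → Fin (n + 1) → ℕ,
      Feasible p b r chat ∧ OrderedBy chat σ ∧
      ∑ j, chat (Fin.last m) j ≤ ∑ j, c (Fin.last m) j := by
  obtain ⟨hc1, hc2, hc3, hc4⟩ := hc
  set e : Fin (m + 1) → Equiv.Perm (Fin (n + 1)) :=
    fun i => σ.symm.trans (Tuple.sort (c i)) with he
  refine ⟨fun i j => c i (e i j), ⟨?_, ?_, ?_, ?_⟩, ?_, ?_⟩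
  · -- release dates
    intro j
    have := key_sorted (fun x => r x + p 0) (c 0) σ (Tuple.sort (c 0))
      (fun a b hab => Nat.add_le_add_right (hσ hab) _)
      (Tuple.monotone_sort (c 0)) hc1 (σ.symm j)
    simpa [he] using this
  · -- machine chain
    intro i j
    have := key_sorted (fun x => c i.castSucc x + p i.succ) (c i.succ)
      (Tuple.sort (c i.castSucc)) (Tuple.sort (c i.succ))
      (fun a b hab =>
        Nat.add_le_add_right (Tuple.monotone_sort (c i.castSucc) hab) _)
      (Tuple.monotone_sort (c i.succ)) (hc2 i) (σ.symm j)
    simpa [he] using this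
  · -- batch gaps
    intro i j j' hne
    exact hc3 i (e i j) (e i j') hne
  · -- batch sizes
    intro i t
    have : (Finset.univ.filter fun j => c i (e i j) = t) =
        (Finset.univ.filter fun j => c i j = t).map (e i).symm.toEmbedding := by
      ext j
      simp only [Finset.mem_filter, Finset.mem_univ, true_and, Finset.mem_map,
        Equiv.coe_toEmbedding]
      constructor
      · intro hj
        exact ⟨e i j, hj, (e i).symm_apply_apply j⟩
      · rintro ⟨x, hx, rfl⟩
        simpa using hx
    rw [this, Finset.card_map]
    exact hc4 i t
  · -- ordered by σ
    intro i a b hab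
    have : Monotone (c i ∘ Tuple.sort (c i)) := Tuple.monotone_sort (c i)
    simpa [he] using this hab
  · -- total completion time
    exact le_of_eq (Equiv.sum_comp (e (Fin.last m)) (c (Fin.last m)))
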